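/- For every finite Y ⊆ Prop and every LTL formula φ: if φ represents Y concisely (i.e., Y ⊆ Prop(φ) and Sz(φ) ≤ 2|Y| − 1), then φ is concise, Prop(φ) = Y, and Sz(φ) = 2|Y| − 1. -/

import Mathlib

namespace Temporal

/-- LTL formulas over a set of atomic propositions `P`. -/
inductive LTL (P : Type) : Type where
  | atom : P → LTL P
  | lnot : LTL P → LTL P
  | land : LTL P → LTL P → LTL P
  | lor : LTL P → LTL P → LTL P
  | limp : LTL P → LTL P → LTL P
  | liff : LTL P → LTL P → LTL P
  | next : LTL P → LTL P
  | fut : LTL P → LTL P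
  | glob : LTL P → LTL P
  | untl : LTL P → LTL P → LTL P
  | rel : LTL P → LTL P → LTL P
  | wuntl : LTL P → LTL P → LTL P
  | mrel : LTL P → LTL P → LTL P

variable {P : Type}

/-- Suffix `w[i:]` of an infinite word. -/
def shift (w : ℕ → Set P) (i : ℕ) : ℕ → Set P := fun n => w (n + i)

/-- The constant infinite word `α^ω`. -/
def constW (α : Set P) : ℕ → Set P := fun _ => α

/-- LTL semantics on infinite words. -/
def LTL.Sat : LTL P → (ℕ → Set P) → Prop
  | .atom p, w => p ∈ w 0
  | .lnot φ, w => ¬ φ.Sat w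
  | .land φ ψ, w => φ.Sat w ∧ ψ.Sat w
  | .lor φ ψ, w => φ.Sat w ∨ ψ.Sat w
  | .limp φ ψ, w => ¬ φ.Sat w ∨ ψ.Sat w
  | .liff φ ψ, w => (φ.Sat w ∧ ψ.Sat w) ∨ (¬ φ.Sat w ∧ ¬ ψ.Sat w)
  | .next φ, w => φ.Sat (shift w 1)
  | .fut φ, w => ∃ i, φ.Sat (shift w i)
  | .glob φ, w => ∀ i, φ.Sat (shift w i)
  | .untl φ ψ, w => ∃ i, ψ.Sat (shift w i) ∧ ∀ j < i, φ.Sat (shift w j)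
  | .rel φ ψ, w => ¬ ∃ i, ¬ ψ.Sat (shift w i) ∧ ∀ j < i, ¬ φ.Sat (shift w j)
  | .wuntl φ ψ, w =>
      (∃ i, ψ.Sat (shift w i) ∧ ∀ j < i, φ.Sat (shift w j)) ∨ ∀ i, φ.Sat (shift w i)
  | .mrel φ ψ, w =>
      (¬ ∃ i, ¬ ψ.Sat (shift w i) ∧ ∀ j < i, ¬ φ.Sat (shift w j)) ∧ ∃ i, φ.Sat (shift w i)

/-- The set of subformulas of an LTL formula. -/
def LTL.SubF : LTL P → Set (LTL P)
  | .atom p => {.atom p}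
  | .lnot φ => insert (.lnot φ) φ.SubF
  | .land φ ψ => insert (.land φ ψ) (φ.SubF ∪ ψ.SubF)
  | .lor φ ψ => insert (.lor φ ψ) (φ.SubF ∪ ψ.SubF)
  | .limp φ ψ => insert (.limp φ ψ) (φ.SubF ∪ ψ.SubF)
  | .liff φ ψ => insert (.liff φ ψ) (φ.SubF ∪ ψ.SubF)
  | .next φ => insert (.next φ) φ.SubF
  | .fut φ => insert (.fut φ) φ.SubF
  | .glob φ => insert (.glob φ) φ.SubF
  | .untl φ ψ => insert (.untl φ ψ) (φ.SubF ∪ ψ.SubF)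
  | .rel φ ψ => insert (.rel φ ψ) (φ.SubF ∪ ψ.SubF)
  | .wuntl φ ψ => insert (.wuntl φ ψ) (φ.SubF ∪ ψ.SubF)
  | .mrel φ ψ => insert (.mrel φ ψ) (φ.SubF ∪ ψ.SubF)

/-- The size of an LTL formula: its number of (distinct) subformulas. -/
noncomputable def LTL.Sz (φ : LTL P) : ℕ := φ.SubF.ncard

/-- The set of atomic propositions occurring in a formula. -/
def LTL.props (φ : LTL P) : Set P := {p : P | LTL.atom p ∈ φ.SubF}

/-- A formula is temporal-free if no temporal operator occurs in it. -/
inductive LTL.TemporalFree : LTL P → Prop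
  | atom (p : P) : TemporalFree (.atom p)
  | lnot {φ : LTL P} : TemporalFree φ → TemporalFree (.lnot φ)
  | land {φ ψ : LTL P} : TemporalFree φ → TemporalFree ψ → TemporalFree (.land φ ψ)
  | lor {φ ψ : LTL P} : TemporalFree φ → TemporalFree ψ → TemporalFree (.lor φ ψ)
  | limp {φ ψ : LTL P} : TemporalFree φ → TemporalFree ψ → TemporalFree (.limp φ ψ)
  | liff {φ ψ : LTL P} : TemporalFree φ → TemporalFree ψ → TemporalFree (.liff φ ψ)

/-- Concise formulas: atoms, and binary combinations of concise formulas over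
disjoint sets of propositions. -/
inductive LTL.Concise : LTL P → Prop
  | atom (p : P) : Concise (.atom p)
  | land {φ ψ : LTL P} : Concise φ → Concise ψ → φ.props ∩ ψ.props = ∅ → Concise (.land φ ψ)
  | lor {φ ψ : LTL P} : Concise φ → Concise ψ → φ.props ∩ ψ.props = ∅ → Concise (.lor φ ψ)
  | limp {φ ψ : LTL P} : Concise φ → Concise ψ → φ.props ∩ ψ.props = ∅ → Concise (.limp φ ψ)
  | liff {φ ψ : LTL P} : Concise φ → Concise ψ → φ.props ∩ ψ.props = ∅ → Concise (.liff φ ψ)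
  | untl {φ ψ : LTL P} : Concise φ → Concise ψ → φ.props ∩ ψ.props = ∅ → Concise (.untl φ ψ)
  | rel {φ ψ : LTL P} : Concise φ → Concise ψ → φ.props ∩ ψ.props = ∅ → Concise (.rel φ ψ)
  | wuntl {φ ψ : LTL P} : Concise φ → Concise ψ → φ.props ∩ ψ.props = ∅ → Concise (.wuntl φ ψ)
  | mrel {φ ψ : LTL P} : Concise φ → Concise ψ → φ.props ∩ ψ.props = ∅ → Concise (.mrel φ ψ)

/-- Formulas in which the only binary operator occurring is `∨`. -/
inductive LTL.OnlyOrBin : LTL P → Prop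
  | atom (p : P) : OnlyOrBin (.atom p)
  | lnot {φ : LTL P} : OnlyOrBin φ → OnlyOrBin (.lnot φ)
  | lor {φ ψ : LTL P} : OnlyOrBin φ → OnlyOrBin ψ → OnlyOrBin (.lor φ ψ)
  | next {φ : LTL P} : OnlyOrBin φ → OnlyOrBin (.next φ)
  | fut {φ : LTL P} : OnlyOrBin φ → OnlyOrBin (.fut φ)
  | glob {φ : LTL P} : OnlyOrBin φ → OnlyOrBin (.glob φ)

/-- Formulas that are disjunctions of atomic propositions, built using only `∨`. -/
inductive LTL.OrOfAtoms : LTL P → Prop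
  | atom (p : P) : OrOfAtoms (.atom p)
  | lor {φ ψ : LTL P} : OrOfAtoms φ → OrOfAtoms ψ → OrOfAtoms (.lor φ ψ)

/- ### The 3-SAT reduction.
Variables `x_k` are indexed by `k < m`; the atomic proposition `(k, true)`
represents `x_k` and `(k, false)` represents `x̄_k`. -/

/-- A literal: a variable index together with its polarity. -/
abbrev Lit := ℕ × Bool

/-- A 3-clause. -/
abbrev Clause3 := Lit × Lit × Lit

/-- A literal holds under a valuation. -/
def litSat (v : ℕ → Bool) (l : Lit) : Prop := v l.1 = l.2

/-- A clause holds under a valuation. -/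
def clauseSat (v : ℕ → Bool) (c : Clause3) : Prop :=
  litSat v c.1 ∨ litSat v c.2.1 ∨ litSat v c.2.2

/-- A valuation satisfies a 3-CNF formula (a list of clauses). -/
def cnfSat (v : ℕ → Bool) (Φ : List Clause3) : Prop := ∀ c ∈ Φ, clauseSat v c

/-- All variables of the 3-CNF formula are among `x_0, …, x_{m-1}`. -/
def cnfVars (m : ℕ) (Φ : List Clause3) : Prop :=
  ∀ c ∈ Φ, c.1.1 < m ∧ c.2.1.1 < m ∧ c.2.2.1 < m

/-- The letter `C_i = {l̃₁, l̃₂, l̃₃}` associated with a clause. -/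
def clauseSet (c : Clause3) : Set Lit := {c.1, c.2.1, c.2.2}

/-- The pair `X_k = {x_k, x̄_k}` of propositions associated with variable `x_k`. -/
def rho (k : ℕ) : Set Lit := {(k, true), (k, false)}

/-- The set `𝒫` of positive words of the reduction. -/
def Pos (m : ℕ) (Φ : List Clause3) : Set (ℕ → Set Lit) :=
  {w | (∃ c ∈ Φ, w = constW (clauseSet c)) ∨ ∃ k < m, w = constW (rho k)}

/-- The negative word `η = ∅^ω`. -/
def negWord : ℕ → Set Lit := constW ∅

/-- `φ` separates `𝒫` and `𝒩 = {η}`. -/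
def Separates (m : ℕ) (Φ : List Clause3) (φ : LTL Lit) : Prop :=
  (∀ w ∈ Pos m Φ, φ.Sat w) ∧ ¬ φ.Sat negWord

/-- All propositions of `φ` are among `{x_k, x̄_k : k < m}`. -/
def propsInRange (m : ℕ) (φ : LTL Lit) : Prop := ∀ p ∈ φ.props, p.1 < m

/-- The disjunction `x_0^v ∨ x_1^v ∨ ⋯ ∨ x_{m-1}^v` (for `m ≥ 1`),
where `x_k^v` is the atom `(k, v k)`. -/
def vDisj (v : ℕ → Bool) : ℕ → LTL Lit
  | 0 => .atom (0, v 0)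
  | 1 => .atom (0, v 0)
  | (k + 2) => .lor (vDisj v (k + 1)) (.atom (k + 1, v (k + 1)))

/-- A formula is disjunctive on a set `I` of variable indices. -/
def DisjunctiveOn (I : Set ℕ) (φ : LTL Lit) : Prop :=
  φ.TemporalFree ∧ φ.Concise ∧ φ.OnlyOrBin ∧
    φ.props.ncard = I.ncard ∧ ∀ k ∈ I, (φ.props ∩ rho k).ncard = 1

/-- A formula is `I`-concise for a set `I` of variable indices. -/
def IConciseOn (I : Set ℕ) (φ : LTL Lit) : Prop :=
  φ.Concise ∧ φ.props.ncard = I.ncard ∧ ∀ k ∈ I, (φ.props ∩ rho k).ncard = 1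

/- ### CTL -/

/-- CTL (state) formulas over `P`; a quantified temporal subformula, e.g. `E(φ U ψ)`,
is a single constructor (`Bool` is the path quantifier: `true` = E, `false` = A). -/
inductive CTL (P : Type) : Type where
  | atom : P → CTL P
  | lnot : CTL P → CTL P
  | land : CTL P → CTL P → CTL P
  | lor : CTL P → CTL P → CTL P
  | limp : CTL P → CTL P → CTL P
  | liff : CTL P → CTL P → CTL P
  | qnext : Bool → CTL P → CTL P
  | qfut : Bool → CTL P → CTL P
  | qglob : Bool → CTL P → CTL P
  | quntl : Bool → CTL P → CTL P → CTL P
  | qrel : Bool → CTL P → CTL P → CTL P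
  | qwuntl : Bool → CTL P → CTL P → CTL P
  | qmrel : Bool → CTL P → CTL P → CTL P

/-- A Kripke structure over `P`. -/
structure Kripke (P : Type) where
  S : Type
  I : Set S
  R : S → S → Prop
  total : ∀ s : S, ∃ t : S, R s t
  L : S → Set P

/-- An infinite path of a Kripke structure. -/
def Kripke.IsPath (M : Kripke P) (π : ℕ → M.S) : Prop := ∀ i, M.R (π i) (π (i + 1))

/-- Path quantification: `q = true` is `E` (some path from `s`), `q = false` is `A`. -/
def Kripke.Q (M : Kripke P) (q : Bool) (s : M.S) (pred : (ℕ → M.S) → Prop) : Prop :=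
  if q then ∃ π : ℕ → M.S, M.IsPath π ∧ π 0 = s ∧ pred π
  else ∀ π : ℕ → M.S, M.IsPath π → π 0 = s → pred π

/-- CTL semantics at a state of a Kripke structure. -/
def CTL.Sat (M : Kripke P) : CTL P → M.S → Prop
  | .atom p, s => p ∈ M.L s
  | .lnot φ, s => ¬ φ.Sat M s
  | .land φ ψ, s => φ.Sat M s ∧ ψ.Sat M s
  | .lor φ ψ, s => φ.Sat M s ∨ ψ.Sat M s
  | .limp φ ψ, s => ¬ φ.Sat M s ∨ ψ.Sat M s
  | .liff φ ψ, s => (φ.Sat M s ∧ ψ.Sat M s) ∨ (¬ φ.Sat M s ∧ ¬ ψ.Sat M s)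
  | .qnext q φ, s => M.Q q s fun π => φ.Sat M (π 1)
  | .qfut q φ, s => M.Q q s fun π => ∃ i, φ.Sat M (π i)
  | .qglob q φ, s => M.Q q s fun π => ∀ i, φ.Sat M (π i)
  | .quntl q φ ψ, s => M.Q q s fun π => ∃ i, ψ.Sat M (π i) ∧ ∀ j < i, φ.Sat M (π j)
  | .qrel q φ ψ, s => M.Q q s fun π => ¬ ∃ i, ¬ ψ.Sat M (π i) ∧ ∀ j < i, ¬ φ.Sat M (π j)
  | .qwuntl q φ ψ, s => M.Q q s fun π =>
      (∃ i, ψ.Sat M (π i) ∧ ∀ j < i, φ.Sat M (π j)) ∨ ∀ i, φ.Sat M (π i)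
  | .qmrel q φ ψ, s => M.Q q s fun π =>
      (¬ ∃ i, ¬ ψ.Sat M (π i) ∧ ∀ j < i, ¬ φ.Sat M (π j)) ∧ ∃ i, φ.Sat M (π i)

/-- `M ⊨ φ`: the formula holds at every initial state. -/
def Kripke.Models (M : Kripke P) (φ : CTL P) : Prop := ∀ s ∈ M.I, φ.Sat M s

/-- The set of subformulas of a CTL formula (a quantified temporal subformula counts
as a single subformula together with the subformulas of its arguments). -/
def CTL.SubF : CTL P → Set (CTL P)
  | .atom p => {.atom p}
  | .lnot φ => insert (.lnot φ) φ.SubF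
  | .land φ ψ => insert (.land φ ψ) (φ.SubF ∪ ψ.SubF)
  | .lor φ ψ => insert (.lor φ ψ) (φ.SubF ∪ ψ.SubF)
  | .limp φ ψ => insert (.limp φ ψ) (φ.SubF ∪ ψ.SubF)
  | .liff φ ψ => insert (.liff φ ψ) (φ.SubF ∪ ψ.SubF)
  | .qnext q φ => insert (.qnext q φ) φ.SubF
  | .qfut q φ => insert (.qfut q φ) φ.SubF
  | .qglob q φ => insert (.qglob q φ) φ.SubF
  | .quntl q φ ψ => insert (.quntl q φ ψ) (φ.SubF ∪ ψ.SubF)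
  | .qrel q φ ψ => insert (.qrel q φ ψ) (φ.SubF ∪ ψ.SubF)
  | .qwuntl q φ ψ => insert (.qwuntl q φ ψ) (φ.SubF ∪ ψ.SubF)
  | .qmrel q φ ψ => insert (.qmrel q φ ψ) (φ.SubF ∪ ψ.SubF)

/-- The size of a CTL formula: its number of (distinct) subformulas. -/
noncomputable def CTL.Sz (φ : CTL P) : ℕ := φ.SubF.ncard

/-- `f_{CTL→LTL}`: erase all path quantifiers. -/
def CTL.toLTL : CTL P → LTL P
  | .atom p => .atom p
  | .lnot φ => .lnot φ.toLTL
  | .land φ ψ => .land φ.toLTL ψ.toLTL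
  | .lor φ ψ => .lor φ.toLTL ψ.toLTL
  | .limp φ ψ => .limp φ.toLTL ψ.toLTL
  | .liff φ ψ => .liff φ.toLTL ψ.toLTL
  | .qnext _ φ => .next φ.toLTL
  | .qfut _ φ => .fut φ.toLTL
  | .qglob _ φ => .glob φ.toLTL
  | .quntl _ φ ψ => .untl φ.toLTL ψ.toLTL
  | .qrel _ φ ψ => .rel φ.toLTL ψ.toLTL
  | .qwuntl _ φ ψ => .wuntl φ.toLTL ψ.toLTL
  | .qmrel _ φ ψ => .mrel φ.toLTL ψ.toLTL

/-- `f_{LTL→CTL}`: insert the quantifier `E` before every temporal operator. -/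
def LTL.toCTL : LTL P → CTL P
  | .atom p => .atom p
  | .lnot φ => .lnot φ.toCTL
  | .land φ ψ => .land φ.toCTL ψ.toCTL
  | .lor φ ψ => .lor φ.toCTL ψ.toCTL
  | .limp φ ψ => .limp φ.toCTL ψ.toCTL
  | .liff φ ψ => .liff φ.toCTL ψ.toCTL
  | .next φ => .qnext true φ.toCTL
  | .fut φ => .qfut true φ.toCTL
  | .glob φ => .qglob true φ.toCTL
  | .untl φ ψ => .quntl true φ.toCTL ψ.toCTL
  | .rel φ ψ => .qrel true φ.toCTL ψ.toCTL
  | .wuntl φ ψ => .qwuntl true φ.toCTL ψ.toCTL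
  | .mrel φ ψ => .qmrel true φ.toCTL ψ.toCTL

/-- The one-state Kripke structure `M_{α^ω}`. -/
def singleKripke (α : Set P) : Kripke P where
  S := Unit
  I := Set.univ
  R := fun _ _ => True
  total := fun s => ⟨s, trivial⟩
  L := fun _ => α


section Aux

variable {P : Type}

/-- Constructor-count size of a formula. -/
def LTL.csize : LTL P → ℕ
  | .atom _ => 1
  | .lnot φ => φ.csize + 1
  | .next φ => φ.csize + 1
  | .fut φ => φ.csize + 1
  | .glob φ => φ.csize + 1
  | .land φ ψ => φ.csize + ψ.csize + 1
  | .lor φ ψ => φ.csize + ψ.csize + 1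
  | .limp φ ψ => φ.csize + ψ.csize + 1
  | .liff φ ψ => φ.csize + ψ.csize + 1
  | .untl φ ψ => φ.csize + ψ.csize + 1
  | .rel φ ψ => φ.csize + ψ.csize + 1
  | .wuntl φ ψ => φ.csize + ψ.csize + 1
  | .mrel φ ψ => φ.csize + ψ.csize + 1

lemma csize_le_of_mem : ∀ {φ ψ : LTL P}, ψ ∈ φ.SubF → ψ.csize ≤ φ.csize := by
  intro φ
  induction φ with
  | atom p =>
      intro ψ h
      simp only [LTL.SubF, Set.mem_singleton_iff] at h
      subst h; exact le_rfl
  | lnot χ ih =>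
      intro ψ h
      simp only [LTL.SubF, Set.mem_insert_iff] at h
      rcases h with rfl | h
      · exact le_rfl
      · exact (ih h).trans (by simp only [LTL.csize]; omega)
  | next χ ih =>
      intro ψ h
      simp only [LTL.SubF, Set.mem_insert_iff] at h
      rcases h with rfl | h
      · exact le_rfl
      · exact (ih h).trans (by simp only [LTL.csize]; omega)
  | fut χ ih =>
      intro ψ h
      simp only [LTL.SubF, Set.mem_insert_iff] at h
      rcases h with rfl | h
      · exact le_rfl
      · exact (ih h).trans (by simp only [LTL.csize]; omega)
  | glob χ ih =>
      intro ψ h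
      simp only [LTL.SubF, Set.mem_insert_iff] at h
      rcases h with rfl | h
      · exact le_rfl
      · exact (ih h).trans (by simp only [LTL.csize]; omega)
  | land χ₁ χ₂ ih1 ih2 =>
      intro ψ h
      simp only [LTL.SubF, Set.mem_insert_iff, Set.mem_union] at h
      rcases h with rfl | h | h
      · exact le_rfl
      · exact (ih1 h).trans (by simp only [LTL.csize]; omega)
      · exact (ih2 h).trans (by simp only [LTL.csize]; omega)
  | lor χ₁ χ₂ ih1 ih2 =>
      intro ψ h
      simp only [LTL.SubF, Set.mem_insert_iff, Set.mem_union] at h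
      rcases h with rfl | h | h
      · exact le_rfl
      · exact (ih1 h).trans (by simp only [LTL.csize]; omega)
      · exact (ih2 h).trans (by simp only [LTL.csize]; omega)
  | limp χ₁ χ₂ ih1 ih2 =>
      intro ψ h
      simp only [LTL.SubF, Set.mem_insert_iff, Set.mem_union] at h
      rcases h with rfl | h | h
      · exact le_rfl
      · exact (ih1 h).trans (by simp only [LTL.csize]; omega)
      · exact (ih2 h).trans (by simp only [LTL.csize]; omega)
  | liff χ₁ χ₂ ih1 ih2 =>
      intro ψ h
      simp only [LTL.SubF, Set.mem_insert_iff, Set.mem_union] at h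
      rcases h with rfl | h | h
      · exact le_rfl
      · exact (ih1 h).trans (by simp only [LTL.csize]; omega)
      · exact (ih2 h).trans (by simp only [LTL.csize]; omega)
  | untl χ₁ χ₂ ih1 ih2 =>
      intro ψ h
      simp only [LTL.SubF, Set.mem_insert_iff, Set.mem_union] at h
      rcases h with rfl | h | h
      · exact le_rfl
      · exact (ih1 h).trans (by simp only [LTL.csize]; omega)
      · exact (ih2 h).trans (by simp only [LTL.csize]; omega)
  | rel χ₁ χ₂ ih1 ih2 =>
      intro ψ h
      simp only [LTL.SubF, Set.mem_insert_iff, Set.mem_union] at h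
      rcases h with rfl | h | h
      · exact le_rfl
      · exact (ih1 h).trans (by simp only [LTL.csize]; omega)
      · exact (ih2 h).trans (by simp only [LTL.csize]; omega)
  | wuntl χ₁ χ₂ ih1 ih2 =>
      intro ψ h
      simp only [LTL.SubF, Set.mem_insert_iff, Set.mem_union] at h
      rcases h with rfl | h | h
      · exact le_rfl
      · exact (ih1 h).trans (by simp only [LTL.csize]; omega)
      · exact (ih2 h).trans (by simp only [LTL.csize]; omega)
  | mrel χ₁ χ₂ ih1 ih2 =>
      intro ψ h
      simp only [LTL.SubF, Set.mem_insert_iff, Set.mem_union] at h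
      rcases h with rfl | h | h
      · exact le_rfl
      · exact (ih1 h).trans (by simp only [LTL.csize]; omega)
      · exact (ih2 h).trans (by simp only [LTL.csize]; omega)

lemma not_mem_subF_of_lt {φ ψ : LTL P} (h : φ.csize < ψ.csize) : ψ ∉ φ.SubF :=
  fun hm => absurd (csize_le_of_mem hm) (by omega)

lemma subF_self (φ : LTL P) : φ ∈ φ.SubF := by
  cases φ <;> simp [LTL.SubF]

lemma subF_closed : ∀ {φ ψ : LTL P}, ψ ∈ φ.SubF → ψ.SubF ⊆ φ.SubF := by
  intro φ
  induction φ with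
  | atom p =>
      intro ψ h
      simp only [LTL.SubF, Set.mem_singleton_iff] at h
      subst h; exact subset_rfl
  | lnot χ ih =>
      intro ψ h
      simp only [LTL.SubF, Set.mem_insert_iff] at h
      rcases h with rfl | h
      · exact subset_rfl
      · exact (ih h).trans (Set.subset_insert _ _)
  | next χ ih =>
      intro ψ h
      simp only [LTL.SubF, Set.mem_insert_iff] at h
      rcases h with rfl | h
      · exact subset_rfl
      · exact (ih h).trans (Set.subset_insert _ _)
  | fut χ ih =>
      intro ψ h
      simp only [LTL.SubF, Set.mem_insert_iff] at h
      rcases h with rfl | h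
      · exact subset_rfl
      · exact (ih h).trans (Set.subset_insert _ _)
  | glob χ ih =>
      intro ψ h
      simp only [LTL.SubF, Set.mem_insert_iff] at h
      rcases h with rfl | h
      · exact subset_rfl
      · exact (ih h).trans (Set.subset_insert _ _)
  | land χ₁ χ₂ ih1 ih2 =>
      intro ψ h
      simp only [LTL.SubF, Set.mem_insert_iff, Set.mem_union] at h
      rcases h with rfl | h | h
      · exact subset_rfl
      · exact (ih1 h).trans ((Set.subset_union_left).trans (Set.subset_insert _ _))
      · exact (ih2 h).trans ((Set.subset_union_right).trans (Set.subset_insert _ _))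
  | lor χ₁ χ₂ ih1 ih2 =>
      intro ψ h
      simp only [LTL.SubF, Set.mem_insert_iff, Set.mem_union] at h
      rcases h with rfl | h | h
      · exact subset_rfl
      · exact (ih1 h).trans ((Set.subset_union_left).trans (Set.subset_insert _ _))
      · exact (ih2 h).trans ((Set.subset_union_right).trans (Set.subset_insert _ _))
  | limp χ₁ χ₂ ih1 ih2 =>
      intro ψ h
      simp only [LTL.SubF, Set.mem_insert_iff, Set.mem_union] at h
      rcases h with rfl | h | h
      · exact subset_rfl
      · exact (ih1 h).trans ((Set.subset_union_left).trans (Set.subset_insert _ _))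
      · exact (ih2 h).trans ((Set.subset_union_right).trans (Set.subset_insert _ _))
  | liff χ₁ χ₂ ih1 ih2 =>
      intro ψ h
      simp only [LTL.SubF, Set.mem_insert_iff, Set.mem_union] at h
      rcases h with rfl | h | h
      · exact subset_rfl
      · exact (ih1 h).trans ((Set.subset_union_left).trans (Set.subset_insert _ _))
      · exact (ih2 h).trans ((Set.subset_union_right).trans (Set.subset_insert _ _))
  | untl χ₁ χ₂ ih1 ih2 =>
      intro ψ h
      simp only [LTL.SubF, Set.mem_insert_iff, Set.mem_union] at h
      rcases h with rfl | h | h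
      · exact subset_rfl
      · exact (ih1 h).trans ((Set.subset_union_left).trans (Set.subset_insert _ _))
      · exact (ih2 h).trans ((Set.subset_union_right).trans (Set.subset_insert _ _))
  | rel χ₁ χ₂ ih1 ih2 =>
      intro ψ h
      simp only [LTL.SubF, Set.mem_insert_iff, Set.mem_union] at h
      rcases h with rfl | h | h
      · exact subset_rfl
      · exact (ih1 h).trans ((Set.subset_union_left).trans (Set.subset_insert _ _))
      · exact (ih2 h).trans ((Set.subset_union_right).trans (Set.subset_insert _ _))
  | wuntl χ₁ χ₂ ih1 ih2 =>
      intro ψ h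
      simp only [LTL.SubF, Set.mem_insert_iff, Set.mem_union] at h
      rcases h with rfl | h | h
      · exact subset_rfl
      · exact (ih1 h).trans ((Set.subset_union_left).trans (Set.subset_insert _ _))
      · exact (ih2 h).trans ((Set.subset_union_right).trans (Set.subset_insert _ _))
  | mrel χ₁ χ₂ ih1 ih2 =>
      intro ψ h
      simp only [LTL.SubF, Set.mem_insert_iff, Set.mem_union] at h
      rcases h with rfl | h | h
      · exact subset_rfl
      · exact (ih1 h).trans ((Set.subset_union_left).trans (Set.subset_insert _ _))
      · exact (ih2 h).trans ((Set.subset_union_right).trans (Set.subset_insert _ _))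

lemma subF_finite (φ : LTL P) : φ.SubF.Finite := by
  induction φ with
  | atom p => exact Set.finite_singleton _
  | lnot χ ih => simp only [LTL.SubF]; exact ih.insert _
  | next χ ih => simp only [LTL.SubF]; exact ih.insert _
  | fut χ ih => simp only [LTL.SubF]; exact ih.insert _
  | glob χ ih => simp only [LTL.SubF]; exact ih.insert _
  | land χ₁ χ₂ ih1 ih2 => simp only [LTL.SubF]; exact (ih1.union ih2).insert _
  | lor χ₁ χ₂ ih1 ih2 => simp only [LTL.SubF]; exact (ih1.union ih2).insert _
  | limp χ₁ χ₂ ih1 ih2 => simp only [LTL.SubF]; exact (ih1.union ih2).insert _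
  | liff χ₁ χ₂ ih1 ih2 => simp only [LTL.SubF]; exact (ih1.union ih2).insert _
  | untl χ₁ χ₂ ih1 ih2 => simp only [LTL.SubF]; exact (ih1.union ih2).insert _
  | rel χ₁ χ₂ ih1 ih2 => simp only [LTL.SubF]; exact (ih1.union ih2).insert _
  | wuntl χ₁ χ₂ ih1 ih2 => simp only [LTL.SubF]; exact (ih1.union ih2).insert _
  | mrel χ₁ χ₂ ih1 ih2 => simp only [LTL.SubF]; exact (ih1.union ih2).insert _

lemma props_lnot (χ : LTL P) : (LTL.lnot χ).props = χ.props := by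
  ext q; simp [LTL.props, LTL.SubF]

lemma props_next (χ : LTL P) : (LTL.next χ).props = χ.props := by
  ext q; simp [LTL.props, LTL.SubF]

lemma props_fut (χ : LTL P) : (LTL.fut χ).props = χ.props := by
  ext q; simp [LTL.props, LTL.SubF]

lemma props_glob (χ : LTL P) : (LTL.glob χ).props = χ.props := by
  ext q; simp [LTL.props, LTL.SubF]

lemma props_land (χ₁ χ₂ : LTL P) : (LTL.land χ₁ χ₂).props = χ₁.props ∪ χ₂.props := by
  ext q; simp [LTL.props, LTL.SubF]

lemma props_lor (χ₁ χ₂ : LTL P) : (LTL.lor χ₁ χ₂).props = χ₁.props ∪ χ₂.props := by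
  ext q; simp [LTL.props, LTL.SubF]

lemma props_limp (χ₁ χ₂ : LTL P) : (LTL.limp χ₁ χ₂).props = χ₁.props ∪ χ₂.props := by
  ext q; simp [LTL.props, LTL.SubF]

lemma props_liff (χ₁ χ₂ : LTL P) : (LTL.liff χ₁ χ₂).props = χ₁.props ∪ χ₂.props := by
  ext q; simp [LTL.props, LTL.SubF]

lemma props_untl (χ₁ χ₂ : LTL P) : (LTL.untl χ₁ χ₂).props = χ₁.props ∪ χ₂.props := by
  ext q; simp [LTL.props, LTL.SubF]

lemma props_rel (χ₁ χ₂ : LTL P) : (LTL.rel χ₁ χ₂).props = χ₁.props ∪ χ₂.props := by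
  ext q; simp [LTL.props, LTL.SubF]

lemma props_wuntl (χ₁ χ₂ : LTL P) : (LTL.wuntl χ₁ χ₂).props = χ₁.props ∪ χ₂.props := by
  ext q; simp [LTL.props, LTL.SubF]

lemma props_mrel (χ₁ χ₂ : LTL P) : (LTL.mrel χ₁ χ₂).props = χ₁.props ∪ χ₂.props := by
  ext q; simp [LTL.props, LTL.SubF]

lemma props_nonempty (φ : LTL P) : φ.props.Nonempty := by
  induction φ with
  | atom p => exact ⟨p, by simp [LTL.props, LTL.SubF]⟩
  | lnot χ ih => rw [props_lnot]; exact ih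
  | next χ ih => rw [props_next]; exact ih
  | fut χ ih => rw [props_fut]; exact ih
  | glob χ ih => rw [props_glob]; exact ih
  | land χ₁ χ₂ ih1 ih2 => rw [props_land]; exact ih1.mono Set.subset_union_left
  | lor χ₁ χ₂ ih1 ih2 => rw [props_lor]; exact ih1.mono Set.subset_union_left
  | limp χ₁ χ₂ ih1 ih2 => rw [props_limp]; exact ih1.mono Set.subset_union_left
  | liff χ₁ χ₂ ih1 ih2 => rw [props_liff]; exact ih1.mono Set.subset_union_left
  | untl χ₁ χ₂ ih1 ih2 => rw [props_untl]; exact ih1.mono Set.subset_union_left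
  | rel χ₁ χ₂ ih1 ih2 => rw [props_rel]; exact ih1.mono Set.subset_union_left
  | wuntl χ₁ χ₂ ih1 ih2 => rw [props_wuntl]; exact ih1.mono Set.subset_union_left
  | mrel χ₁ χ₂ ih1 ih2 => rw [props_mrel]; exact ih1.mono Set.subset_union_left

lemma props_finite (φ : LTL P) : φ.props.Finite := by
  have h : φ.props = LTL.atom ⁻¹' φ.SubF := rfl
  rw [h]
  exact Set.Finite.preimage (fun a _ b _ hab => by injection hab) (subF_finite φ)

/-- atoms occurring in a set of formulas -/
def atomsOf (T : Set (LTL P)) : Set P := {p : P | LTL.atom p ∈ T}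

/-- Main counting invariant. -/
def GoodT (φ : LTL P) : Prop :=
  ∀ T : Set (LTL P), T.Finite → (∀ χ ∈ T, LTL.SubF χ ⊆ T) →
    (T.ncard + 2 * (φ.props \ atomsOf T).ncard ≤ (φ.SubF ∪ T).ncard + 1) ∧
    (¬ (φ.props ∩ atomsOf T = ∅) →
      T.ncard + 2 * (φ.props \ atomsOf T).ncard ≤ (φ.SubF ∪ T).ncard)

lemma good_mem {e : LTL P} {T : Set (LTL P)} (hcl : ∀ χ ∈ T, LTL.SubF χ ⊆ T)
    (heT : e ∈ T) :
    (T.ncard + 2 * (e.props \ atomsOf T).ncard ≤ (e.SubF ∪ T).ncard + 1) ∧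
    (¬ (e.props ∩ atomsOf T = ∅) →
      T.ncard + 2 * (e.props \ atomsOf T).ncard ≤ (e.SubF ∪ T).ncard) := by
  have hu : e.SubF ∪ T = T := Set.union_eq_self_of_subset_left (hcl e heT)
  have hd : e.props \ atomsOf T = ∅ :=
    Set.diff_eq_empty.mpr (fun p hp => hcl e heT hp)
  rw [hu, hd]
  simp only [Set.ncard_empty, Nat.mul_zero, Nat.add_zero]
  exact ⟨Nat.le_succ _, fun _ => le_rfl⟩

lemma good_atom (p : P) : GoodT (LTL.atom p) := by
  intro T hT hcl
  by_cases hp : LTL.atom p ∈ T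
  · exact good_mem hcl hp
  · have hP : (LTL.atom p).props = {p} := by
      ext q; simp [LTL.props, LTL.SubF]
    have hpA : p ∉ atomsOf T := hp
    have hu : ((LTL.atom p).SubF ∪ T).ncard = T.ncard + 1 := by
      have hS : (LTL.atom p).SubF = {LTL.atom p} := rfl
      rw [hS, Set.singleton_union]
      exact Set.ncard_insert_of_notMem hp hT
    have hd : (LTL.atom p).props \ atomsOf T = {p} := by
      rw [hP]
      ext q
      simp only [Set.mem_diff, Set.mem_singleton_iff]
      exact ⟨fun h => h.1, fun h => ⟨h, h ▸ hpA⟩⟩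
    rw [hd, hu, Set.ncard_singleton]
    refine ⟨by omega, fun hne => ?_⟩
    exfalso
    apply hne
    rw [hP]
    apply Set.eq_empty_iff_forall_notMem.mpr
    rintro q ⟨hq1, hq2⟩
    rw [Set.mem_singleton_iff] at hq1
    subst hq1
    exact hpA hq2

lemma good_unary {χ e : LTL P} (hS : e.SubF = insert e χ.SubF)
    (hP : e.props = χ.props) (hne : e ∉ χ.SubF) (g : GoodT χ) : GoodT e := by
  intro T hT hcl
  by_cases heT : e ∈ T
  · exact good_mem hcl heT
  · have hucard : (e.SubF ∪ T).ncard = (χ.SubF ∪ T).ncard + 1 := by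
      rw [hS, Set.insert_union]
      refine Set.ncard_insert_of_notMem ?_ ((subF_finite χ).union hT)
      intro hc
      simp only [Set.mem_union] at hc
      rcases hc with hc | hc
      · exact hne hc
      · exact heT hc
    obtain ⟨h1, _⟩ := g T hT hcl
    rw [hP, hucard]
    exact ⟨by omega, fun _ => by omega⟩

lemma good_bin {χ₁ χ₂ e : LTL P} (hS : e.SubF = insert e (χ₁.SubF ∪ χ₂.SubF))
    (hP : e.props = χ₁.props ∪ χ₂.props)
    (hm1 : e ∉ χ₁.SubF) (hm2 : e ∉ χ₂.SubF)
    (g1 : GoodT χ₁) (g2 : GoodT χ₂) : GoodT e := by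
  intro T hT hcl
  by_cases heT : e ∈ T
  · exact good_mem hcl heT
  · have hT'fin : (χ₂.SubF ∪ T).Finite := (subF_finite χ₂).union hT
    have hcl' : ∀ ξ ∈ χ₂.SubF ∪ T, LTL.SubF ξ ⊆ χ₂.SubF ∪ T := by
      intro ξ hξ
      simp only [Set.mem_union] at hξ
      rcases hξ with hξ | hξ
      · exact (subF_closed hξ).trans Set.subset_union_left
      · exact (hcl ξ hξ).trans Set.subset_union_right
    obtain ⟨a1, a2⟩ := g2 T hT hcl
    obtain ⟨b1, b2⟩ := g1 (χ₂.SubF ∪ T) hT'fin hcl'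
    have hA' : atomsOf (χ₂.SubF ∪ T) = χ₂.props ∪ atomsOf T := rfl
    rw [hA'] at b1 b2
    have hvcard : (e.SubF ∪ T).ncard = (χ₁.SubF ∪ (χ₂.SubF ∪ T)).ncard + 1 := by
      have he : e.SubF ∪ T = insert e (χ₁.SubF ∪ (χ₂.SubF ∪ T)) := by
        rw [hS, Set.insert_union, Set.union_assoc]
      rw [he]
      refine Set.ncard_insert_of_notMem ?_ ((subF_finite χ₁).union hT'fin)
      intro hc
      simp only [Set.mem_union] at hc
      rcases hc with hc | hc | hc
      · exact hm1 hc
      · exact hm2 hc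
      · exact heT hc
    have hdsplit : ((χ₁.props ∪ χ₂.props) \ atomsOf T).ncard
        = (χ₁.props \ (χ₂.props ∪ atomsOf T)).ncard + (χ₂.props \ atomsOf T).ncard := by
      have hset : (χ₁.props ∪ χ₂.props) \ atomsOf T
          = (χ₁.props \ (χ₂.props ∪ atomsOf T)) ∪ (χ₂.props \ atomsOf T) := by
        ext q
        simp only [Set.mem_diff, Set.mem_union]
        tauto
      rw [hset]
      refine Set.ncard_union_eq ?_ ((props_finite χ₁).diff) ((props_finite χ₂).diff)
      rw [Set.disjoint_left]
      rintro q ⟨hq1, hq2⟩ ⟨hr1, hr2⟩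
      exact hq2 (Or.inl hr1)
    rw [hP, hvcard, hdsplit]
    by_cases hc2 : χ₂.props ∩ atomsOf T = ∅
    · by_cases hc1 : χ₁.props ∩ (χ₂.props ∪ atomsOf T) = ∅
      · have hdisj0 : (χ₁.props ∪ χ₂.props) ∩ atomsOf T = ∅ := by
          apply Set.eq_empty_iff_forall_notMem.mpr
          rintro q ⟨hq, hqA⟩
          rcases hq with hq | hq
          · have : q ∈ χ₁.props ∩ (χ₂.props ∪ atomsOf T) := ⟨hq, Or.inr hqA⟩
            rw [hc1] at this; exact this
          · have : q ∈ χ₂.props ∩ atomsOf T := ⟨hq, hqA⟩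
            rw [hc2] at this; exact this
        exact ⟨by omega, fun hne => absurd hdisj0 hne⟩
      · have hb := b2 hc1
        exact ⟨by omega, fun _ => by omega⟩
    · have ha := a2 hc2
      exact ⟨by omega, fun _ => by omega⟩

lemma good : ∀ φ : LTL P, GoodT φ := by
  intro φ
  induction φ with
  | atom p => exact good_atom p
  | lnot χ ih =>
      exact good_unary (by simp only [LTL.SubF]) (props_lnot χ)
        (not_mem_subF_of_lt (by simp only [LTL.csize]; omega)) ih
  | next χ ih =>
      exact good_unary (by simp only [LTL.SubF]) (props_next χ)
        (not_mem_subF_of_lt (by simp only [LTL.csize]; omega)) ih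
  | fut χ ih =>
      exact good_unary (by simp only [LTL.SubF]) (props_fut χ)
        (not_mem_subF_of_lt (by simp only [LTL.csize]; omega)) ih
  | glob χ ih =>
      exact good_unary (by simp only [LTL.SubF]) (props_glob χ)
        (not_mem_subF_of_lt (by simp only [LTL.csize]; omega)) ih
  | land χ₁ χ₂ ih1 ih2 =>
      exact good_bin (by simp only [LTL.SubF]) (props_land χ₁ χ₂)
        (not_mem_subF_of_lt (by simp only [LTL.csize]; omega))
        (not_mem_subF_of_lt (by simp only [LTL.csize]; omega)) ih1 ih2
  | lor χ₁ χ₂ ih1 ih2 =>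
      exact good_bin (by simp only [LTL.SubF]) (props_lor χ₁ χ₂)
        (not_mem_subF_of_lt (by simp only [LTL.csize]; omega))
        (not_mem_subF_of_lt (by simp only [LTL.csize]; omega)) ih1 ih2
  | limp χ₁ χ₂ ih1 ih2 =>
      exact good_bin (by simp only [LTL.SubF]) (props_limp χ₁ χ₂)
        (not_mem_subF_of_lt (by simp only [LTL.csize]; omega))
        (not_mem_subF_of_lt (by simp only [LTL.csize]; omega)) ih1 ih2
  | liff χ₁ χ₂ ih1 ih2 =>
      exact good_bin (by simp only [LTL.SubF]) (props_liff χ₁ χ₂)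
        (not_mem_subF_of_lt (by simp only [LTL.csize]; omega))
        (not_mem_subF_of_lt (by simp only [LTL.csize]; omega)) ih1 ih2
  | untl χ₁ χ₂ ih1 ih2 =>
      exact good_bin (by simp only [LTL.SubF]) (props_untl χ₁ χ₂)
        (not_mem_subF_of_lt (by simp only [LTL.csize]; omega))
        (not_mem_subF_of_lt (by simp only [LTL.csize]; omega)) ih1 ih2
  | rel χ₁ χ₂ ih1 ih2 =>
      exact good_bin (by simp only [LTL.SubF]) (props_rel χ₁ χ₂)
        (not_mem_subF_of_lt (by simp only [LTL.csize]; omega))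
        (not_mem_subF_of_lt (by simp only [LTL.csize]; omega)) ih1 ih2
  | wuntl χ₁ χ₂ ih1 ih2 =>
      exact good_bin (by simp only [LTL.SubF]) (props_wuntl χ₁ χ₂)
        (not_mem_subF_of_lt (by simp only [LTL.csize]; omega))
        (not_mem_subF_of_lt (by simp only [LTL.csize]; omega)) ih1 ih2
  | mrel χ₁ χ₂ ih1 ih2 =>
      exact good_bin (by simp only [LTL.SubF]) (props_mrel χ₁ χ₂)
        (not_mem_subF_of_lt (by simp only [LTL.csize]; omega))
        (not_mem_subF_of_lt (by simp only [LTL.csize]; omega)) ih1 ih2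

lemma sz_ge (φ : LTL P) : 2 * φ.props.ncard ≤ φ.Sz + 1 := by
  have h := (good φ ∅ Set.finite_empty (by simp)).1
  have hA : atomsOf (∅ : Set (LTL P)) = ∅ := rfl
  rw [hA] at h
  simpa [LTL.Sz] using h

lemma conc_unary {χ e : LTL P} (hS : e.SubF = insert e χ.SubF)
    (hP : e.props = χ.props) (hne : e ∉ χ.SubF)
    (h : e.Sz < 2 * e.props.ncard) : False := by
  have hsz : e.Sz = χ.Sz + 1 := by
    rw [LTL.Sz, hS]
    exact Set.ncard_insert_of_notMem hne (subF_finite χ)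
  have hg := sz_ge χ
  rw [hP] at h
  omega

lemma conc_bin {χ₁ χ₂ e : LTL P} (hS : e.SubF = insert e (χ₁.SubF ∪ χ₂.SubF))
    (hP : e.props = χ₁.props ∪ χ₂.props)
    (hm1 : e ∉ χ₁.SubF) (hm2 : e ∉ χ₂.SubF)
    (ih1 : χ₁.Sz < 2 * χ₁.props.ncard → χ₁.Concise)
    (ih2 : χ₂.Sz < 2 * χ₂.props.ncard → χ₂.Concise)
    (h : e.Sz < 2 * e.props.ncard) :
    χ₁.Concise ∧ χ₂.Concise ∧ χ₁.props ∩ χ₂.props = ∅ := by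
  have hsz' : e.Sz = (χ₁.SubF ∪ χ₂.SubF).ncard + 1 := by
    rw [LTL.Sz, hS]
    refine Set.ncard_insert_of_notMem ?_ ((subF_finite χ₁).union (subF_finite χ₂))
    intro hc
    simp only [Set.mem_union] at hc
    rcases hc with hc | hc
    · exact hm1 hc
    · exact hm2 hc
  have hdisj : χ₁.props ∩ χ₂.props = ∅ := by
    by_contra hne
    have key := (good χ₁ χ₂.SubF (subF_finite χ₂) (fun ξ hξ => subF_closed hξ)).2
    have hA2 : atomsOf χ₂.SubF = χ₂.props := rfl
    rw [hA2] at key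
    have key' := key hne
    have h22 : 2 * χ₂.props.ncard ≤ χ₂.SubF.ncard + 1 := sz_ge χ₂
    have hPcard : e.props.ncard = χ₂.props.ncard + (χ₁.props \ χ₂.props).ncard := by
      rw [hP]
      have hu : χ₁.props ∪ χ₂.props = χ₂.props ∪ (χ₁.props \ χ₂.props) := by
        rw [Set.union_diff_self]
        exact Set.union_comm _ _
      rw [hu]
      exact Set.ncard_union_eq Set.disjoint_sdiff_right (props_finite χ₂)
        ((props_finite χ₁).diff)
    omega
  have hSdisj : Disjoint χ₁.SubF χ₂.SubF := by
    rw [Set.disjoint_left]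
    intro ξ hξ1 hξ2
    obtain ⟨q, hq⟩ := props_nonempty ξ
    have hq1 : LTL.atom q ∈ χ₁.SubF := subF_closed hξ1 hq
    have hq2 : LTL.atom q ∈ χ₂.SubF := subF_closed hξ2 hq
    have hmem : q ∈ χ₁.props ∩ χ₂.props := ⟨hq1, hq2⟩
    rw [hdisj] at hmem
    exact hmem
  have hszsum : e.Sz = χ₁.Sz + χ₂.Sz + 1 := by
    rw [hsz', Set.ncard_union_eq hSdisj (subF_finite χ₁) (subF_finite χ₂)]
    rfl
  have hpsum : e.props.ncard = χ₁.props.ncard + χ₂.props.ncard := by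
    rw [hP]
    exact Set.ncard_union_eq (Set.disjoint_iff_inter_eq_empty.mpr hdisj)
      (props_finite _) (props_finite _)
  have s1 := sz_ge χ₁
  have s2 := sz_ge χ₂
  exact ⟨ih1 (by omega), ih2 (by omega), hdisj⟩

lemma conc : ∀ φ : LTL P, φ.Sz < 2 * φ.props.ncard → φ.Concise := by
  intro φ
  induction φ with
  | atom p => exact fun _ => LTL.Concise.atom p
  | lnot χ ih =>
      intro h
      exact (conc_unary (by simp only [LTL.SubF]) (props_lnot χ)
        (not_mem_subF_of_lt (by simp only [LTL.csize]; omega)) h).elim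
  | next χ ih =>
      intro h
      exact (conc_unary (by simp only [LTL.SubF]) (props_next χ)
        (not_mem_subF_of_lt (by simp only [LTL.csize]; omega)) h).elim
  | fut χ ih =>
      intro h
      exact (conc_unary (by simp only [LTL.SubF]) (props_fut χ)
        (not_mem_subF_of_lt (by simp only [LTL.csize]; omega)) h).elim
  | glob χ ih =>
      intro h
      exact (conc_unary (by simp only [LTL.SubF]) (props_glob χ)
        (not_mem_subF_of_lt (by simp only [LTL.csize]; omega)) h).elim
  | land χ₁ χ₂ ih1 ih2 =>
      intro h
      obtain ⟨c1, c2, cd⟩ := conc_bin (by simp only [LTL.SubF]) (props_land χ₁ χ₂)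
        (not_mem_subF_of_lt (by simp only [LTL.csize]; omega))
        (not_mem_subF_of_lt (by simp only [LTL.csize]; omega)) ih1 ih2 h
      exact LTL.Concise.land c1 c2 cd
  | lor χ₁ χ₂ ih1 ih2 =>
      intro h
      obtain ⟨c1, c2, cd⟩ := conc_bin (by simp only [LTL.SubF]) (props_lor χ₁ χ₂)
        (not_mem_subF_of_lt (by simp only [LTL.csize]; omega))
        (not_mem_subF_of_lt (by simp only [LTL.csize]; omega)) ih1 ih2 h
      exact LTL.Concise.lor c1 c2 cd
  | limp χ₁ χ₂ ih1 ih2 =>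
      intro h
      obtain ⟨c1, c2, cd⟩ := conc_bin (by simp only [LTL.SubF]) (props_limp χ₁ χ₂)
        (not_mem_subF_of_lt (by simp only [LTL.csize]; omega))
        (not_mem_subF_of_lt (by simp only [LTL.csize]; omega)) ih1 ih2 h
      exact LTL.Concise.limp c1 c2 cd
  | liff χ₁ χ₂ ih1 ih2 =>
      intro h
      obtain ⟨c1, c2, cd⟩ := conc_bin (by simp only [LTL.SubF]) (props_liff χ₁ χ₂)
        (not_mem_subF_of_lt (by simp only [LTL.csize]; omega))
        (not_mem_subF_of_lt (by simp only [LTL.csize]; omega)) ih1 ih2 h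
      exact LTL.Concise.liff c1 c2 cd
  | untl χ₁ χ₂ ih1 ih2 =>
      intro h
      obtain ⟨c1, c2, cd⟩ := conc_bin (by simp only [LTL.SubF]) (props_untl χ₁ χ₂)
        (not_mem_subF_of_lt (by simp only [LTL.csize]; omega))
        (not_mem_subF_of_lt (by simp only [LTL.csize]; omega)) ih1 ih2 h
      exact LTL.Concise.untl c1 c2 cd
  | rel χ₁ χ₂ ih1 ih2 =>
      intro h
      obtain ⟨c1, c2, cd⟩ := conc_bin (by simp only [LTL.SubF]) (props_rel χ₁ χ₂)
        (not_mem_subF_of_lt (by simp only [LTL.csize]; omega))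
        (not_mem_subF_of_lt (by simp only [LTL.csize]; omega)) ih1 ih2 h
      exact LTL.Concise.rel c1 c2 cd
  | wuntl χ₁ χ₂ ih1 ih2 =>
      intro h
      obtain ⟨c1, c2, cd⟩ := conc_bin (by simp only [LTL.SubF]) (props_wuntl χ₁ χ₂)
        (not_mem_subF_of_lt (by simp only [LTL.csize]; omega))
        (not_mem_subF_of_lt (by simp only [LTL.csize]; omega)) ih1 ih2 h
      exact LTL.Concise.wuntl c1 c2 cd
  | mrel χ₁ χ₂ ih1 ih2 =>
      intro h
      obtain ⟨c1, c2, cd⟩ := conc_bin (by simp only [LTL.SubF]) (props_mrel χ₁ χ₂)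
        (not_mem_subF_of_lt (by simp only [LTL.csize]; omega))
        (not_mem_subF_of_lt (by simp only [LTL.csize]; omega)) ih1 ih2 h
      exact LTL.Concise.mrel c1 c2 cd

end Aux


/-- a formula representing `Y` concisely is concise, has `Prop(φ) = Y`,
and has size exactly `2|Y| - 1`. -/
theorem concise_of_represents_concisely (P : Type) (Y : Set P) (hY : Y.Finite)
    (φ : LTL P) (hsub : Y ⊆ φ.props) (hsz : φ.Sz ≤ 2 * Y.ncard - 1) :
    φ.Concise ∧ φ.props = Y ∧ φ.Sz = 2 * Y.ncard - 1 := by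
  have hg := sz_ge φ
  have hfin := props_finite φ
  have hYle : Y.ncard ≤ φ.props.ncard := Set.ncard_le_ncard hsub hfin
  have hSz1 : 1 ≤ φ.Sz := (Set.ncard_pos (subF_finite φ)).mpr ⟨φ, subF_self φ⟩
  have hple : φ.props.ncard ≤ Y.ncard := by omega
  have hprops : Y = φ.props := Set.eq_of_subset_of_ncard_le hsub hple hfin
  have hpe : φ.props.ncard = Y.ncard := by rw [hprops]
  refine ⟨conc φ (by omega), hprops.symm, by omega⟩

end Temporal
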